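/- arXiv:2210.07671 — 2 statements merged into one kernel-verified Lean document; each statement's English description precedes it below -/
import Mathlib

section
/- Let C be the middle-third Cantor set and let U = {z ∈ [0,2] : there is a unique pair (x,y) ∈ C × C with x ≤ y and x + y = z}. Then U has Hausdorff dimension log 2 / log 3. -/
open Pointwise MeasureTheory Filter
open scoped ENNReal NNReal

noncomputable section

def linCantor (n : ℕ) (A : Set ℕ) : Set ℝ :=
  {x | ∃ a : ℕ → ℕ, (∀ i, a i ∈ A) ∧ x = ∑' i : ℕ, (a i : ℝ) / n ^ (i + 1)}


/-- value of a digit sequence in base 3 -/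
def cval (a : ℕ → ℕ) : ℝ := ∑' i, (a i : ℝ) / 3 ^ (i + 1)

/-- tail sum from position m -/
def ctail (a : ℕ → ℕ) (m : ℕ) : ℝ := ∑' k, (a (k + m) : ℝ) / 3 ^ (k + m + 1)

lemma geom_sum_aux (m : ℕ) (c : ℝ) (hc : 0 ≤ c) :
    Summable (fun k : ℕ => c / 3 ^ (k + m + 1)) ∧
      (∑' k : ℕ, c / 3 ^ (k + m + 1)) = c / 2 / 3 ^ m := by
  have h3 : |(1/3 : ℝ)| < 1 := by rw [abs_of_pos]; norm_num; norm_num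
  have hs : Summable (fun k : ℕ => (1/3 : ℝ) ^ k) := summable_geometric_of_lt_one (by norm_num) (by norm_num)
  have hfun : ∀ k : ℕ, c / 3 ^ (k + m + 1) = (c / 3 ^ (m + 1)) * (1/3 : ℝ) ^ k := by
    intro k
    have h1 : (3:ℝ) ^ (k + m + 1) = 3 ^ (m + 1) * 3 ^ k := by
      rw [← pow_add]; congr 1; omega
    rw [h1, ← div_div, one_div, inv_pow, ← div_eq_mul_inv]
  constructor
  · simpa only [hfun] using hs.mul_left (c / 3 ^ (m + 1))
  · calc (∑' k : ℕ, c / 3 ^ (k + m + 1)) = ∑' k : ℕ, (c / 3 ^ (m + 1)) * (1/3 : ℝ) ^ k := by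
          exact tsum_congr hfun
    _ = (c / 3 ^ (m + 1)) * (1 - 1/3)⁻¹ := by
          rw [tsum_mul_left, tsum_geometric_of_lt_one (by norm_num) (by norm_num)]
    _ = c / 2 / 3 ^ m := by rw [pow_succ]; field_simp; ring

lemma summable_cval_tail {a : ℕ → ℕ} {M : ℕ} (h : ∀ i, a i ≤ M) (m : ℕ) :
    Summable (fun k : ℕ => (a (k + m) : ℝ) / 3 ^ (k + m + 1)) := by
  refine Summable.of_nonneg_of_le (fun k => by positivity) (fun k => ?_)
    ((geom_sum_aux m (M : ℝ) (by positivity)).1)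
  gcongr
  exact_mod_cast h _

lemma summable_cval {a : ℕ → ℕ} {M : ℕ} (h : ∀ i, a i ≤ M) :
    Summable (fun i : ℕ => (a i : ℝ) / 3 ^ (i + 1)) := by
  simpa using summable_cval_tail h 0

lemma ctail_nonneg (a : ℕ → ℕ) (m : ℕ) : 0 ≤ ctail a m :=
  tsum_nonneg (fun k => by positivity)

lemma ctail_le {a : ℕ → ℕ} {M : ℕ} (h : ∀ i, a i ≤ M) (m : ℕ) :
    ctail a m ≤ (M : ℝ) / 2 / 3 ^ m := by
  rw [← (geom_sum_aux m (M : ℝ) (by positivity)).2]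
  refine (summable_cval_tail h m).tsum_le_tsum (fun k => ?_) (geom_sum_aux m (M:ℝ) (by positivity)).1
  gcongr
  exact_mod_cast h _

lemma cval_split {a : ℕ → ℕ} {M : ℕ} (h : ∀ i, a i ≤ M) (m : ℕ) :
    cval a = (∑ i ∈ Finset.range m, (a i : ℝ) / 3 ^ (i + 1)) + ctail a m := by
  rw [cval, ctail, ← Summable.sum_add_tsum_nat_add m (summable_cval h)]

lemma ctail_step {a : ℕ → ℕ} {M : ℕ} (h : ∀ i, a i ≤ M) (m : ℕ) :
    ctail a m = (a m : ℝ) / 3 ^ (m + 1) + ctail a (m + 1) := by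
  rw [ctail, Summable.tsum_eq_zero_add (summable_cval_tail h m)]
  simp only [zero_add]
  rw [ctail]
  congr 1
  apply tsum_congr
  intro k
  have e : k + 1 + m = k + (m + 1) := by omega
  rw [e]

lemma cval_nonneg (a : ℕ → ℕ) : 0 ≤ cval a := tsum_nonneg (fun k => by positivity)

lemma cval_le {a : ℕ → ℕ} {M : ℕ} (h : ∀ i, a i ≤ M) : cval a ≤ (M : ℝ) / 2 := by
  have := ctail_le h 0
  have h0 := cval_split h 0
  simp at h0 this
  rw [h0]; rwa [ctail] at this ⊢


lemma dig4_le {a : ℕ → ℕ} (ha : ∀ i, a i = 0 ∨ a i = 2 ∨ a i = 4) : ∀ i, a i ≤ 4 :=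
  fun i => by rcases ha i with h|h|h <;> omega

lemma master_half {a b : ℕ → ℕ} (ha : ∀ i, a i = 0 ∨ a i = 2 ∨ a i = 4)
    (hb : ∀ i, b i = 0 ∨ b i = 2 ∨ b i = 4) (hval : cval a = cval b)
    {i₀ : ℕ} (hpre : ∀ i < i₀, a i = b i) (hlt : b i₀ < a i₀) :
    ∀ k, i₀ < k → a k = 0 ∧ b k = 4 := by
  have haM := dig4_le ha
  have hbM := dig4_le hb
  set m := i₀ + 1 with hm
  -- tails at i₀ are equal
  have htail : ctail a i₀ = ctail b i₀ := by
    have h1 := cval_split haM i₀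
    have h2 := cval_split hbM i₀
    have h3 : (∑ i ∈ Finset.range i₀, (a i : ℝ) / 3 ^ (i + 1)) =
        ∑ i ∈ Finset.range i₀, (b i : ℝ) / 3 ^ (i + 1) := by
      refine Finset.sum_congr rfl (fun i hi => ?_)
      rw [hpre i (Finset.mem_range.1 hi)]
    rw [h1, h2, h3] at hval
    linarith
  have key : (a i₀ : ℝ) / 3 ^ (i₀ + 1) + ctail a m =
      (b i₀ : ℝ) / 3 ^ (i₀ + 1) + ctail b m := by
    have := ctail_step haM i₀
    have := ctail_step hbM i₀
    rw [hm]; linarith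
  have hpow : (0:ℝ) < 3 ^ (i₀ + 1) := by positivity
  have hbt : ctail b m ≤ 2 / 3 ^ m := by
    have := ctail_le hbM m; norm_num at this; linarith
  have hat : 0 ≤ ctail a m := ctail_nonneg a m
  -- a i₀ = b i₀ + 2
  have hdig : a i₀ = b i₀ + 2 := by
    have h2 : (b i₀ : ℝ) + 2 ≤ (a i₀ : ℝ) := by
      have : b i₀ + 2 ≤ a i₀ := by
        rcases ha i₀ with h|h|h <;> rcases hb i₀ with h'|h'|h' <;> omega
      exact_mod_cast this
    have h3 : (a i₀ : ℝ) ≤ (b i₀ : ℝ) + 2 := by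
      have hmp : (3:ℝ) ^ m = 3 ^ (i₀ + 1) := by rw [hm]
      rw [hmp] at hbt
      have : (a i₀ : ℝ) / 3 ^ (i₀ + 1) ≤ (b i₀ : ℝ) / 3 ^ (i₀ + 1) + 2 / 3 ^ (i₀ + 1) := by
        linarith
      rw [← add_div] at this
      have := (div_le_div_iff_of_pos_right hpow).1 this
      linarith
    have : (a i₀ : ℝ) = (b i₀ : ℝ) + 2 := le_antisymm h3 h2
    exact_mod_cast this
  -- difference of tails is exactly 2 / 3 ^ m
  have hdiff : ctail b m - ctail a m = 2 / 3 ^ m := by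
    have hmp : (3:ℝ) ^ m = 3 ^ (i₀ + 1) := by rw [hm]
    have : (a i₀ : ℝ) = (b i₀ : ℝ) + 2 := by exact_mod_cast hdig
    rw [this, add_div] at key
    rw [hmp]
    linarith
  -- the nonnegative series with zero sum
  set g : ℕ → ℝ := fun k => ((4:ℝ) - (b (k + m) : ℝ) + (a (k + m) : ℝ)) / 3 ^ (k + m + 1) with hg
  have hsum4 := (geom_sum_aux m (4:ℝ) (by norm_num)).1
  have hbtail := summable_cval_tail hbM m
  have hatail := summable_cval_tail haM m
  have hgeq : ∀ k, g k = (4:ℝ) / 3 ^ (k + m + 1) - (b (k + m) : ℝ) / 3 ^ (k + m + 1)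
      + (a (k + m) : ℝ) / 3 ^ (k + m + 1) := by
    intro k; rw [hg]; ring
  have hgsummable : Summable g := by
    apply Summable.congr (((hsum4.sub hbtail).add hatail)) (fun k => (hgeq k).symm)
  have hgsum : ∑' k, g k = 0 := by
    have e1 : ∑' k, g k = (∑' k, ((4:ℝ) / 3 ^ (k + m + 1) - (b (k + m) : ℝ) / 3 ^ (k + m + 1)))
        + ∑' k, (a (k + m) : ℝ) / 3 ^ (k + m + 1) := by
      rw [← Summable.tsum_add (hsum4.sub hbtail) hatail]
      exact tsum_congr hgeq
    rw [e1, Summable.tsum_sub hsum4 hbtail, (geom_sum_aux m (4:ℝ) (by norm_num)).2]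
    have : ctail b m = ∑' k, (b (k + m) : ℝ) / 3 ^ (k + m + 1) := rfl
    have h4 : (4:ℝ)/2/3^m = 2/3^m := by ring
    rw [h4, ← ctail, ← ctail]
    linarith
  have hgnonneg : ∀ j, 0 ≤ g j := by
    intro j
    have h1 : (b (j + m) : ℝ) ≤ 4 := by exact_mod_cast hbM (j + m)
    have h2 : (0:ℝ) ≤ (a (j + m) : ℝ) := Nat.cast_nonneg _
    have h3 : (0:ℝ) ≤ 3 ^ (j + m + 1) := by positivity
    rw [hg]
    apply div_nonneg _ h3
    linarith
  have hgzero : ∀ k, g k = 0 := by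
    intro k
    have hle : g k ≤ 0 := hgsum ▸ Summable.le_tsum hgsummable k (fun j _ => hgnonneg j)
    linarith [hgnonneg k]
  intro k hk
  have hkm : k = (k - m) + m := by omega
  have := hgzero (k - m)
  rw [hg] at this
  simp only at this
  rw [div_eq_zero_iff] at this
  have h3 : (3:ℝ) ^ (k - m + m + 1) ≠ 0 := by positivity
  have hnum : (4:ℝ) - (b (k - m + m) : ℝ) + (a (k - m + m) : ℝ) = 0 := by tauto
  rw [← hkm] at hnum
  have : (b k : ℝ) = 4 + (a k : ℝ) := by linarith
  have hbk : b k = 4 + a k := by exact_mod_cast this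
  have := hbM k
  omega

lemma master {a b : ℕ → ℕ} (ha : ∀ i, a i = 0 ∨ a i = 2 ∨ a i = 4)
    (hb : ∀ i, b i = 0 ∨ b i = 2 ∨ b i = 4) (hval : cval a = cval b) (hne : a ≠ b) :
    ∃ i₀, (∀ k, i₀ < k → a k = 0 ∧ b k = 4) ∨ (∀ k, i₀ < k → b k = 0 ∧ a k = 4) := by
  have hex : ∃ j, a j ≠ b j := Function.ne_iff.1 hne
  set i₀ := Nat.find hex with hi
  have hpre : ∀ i < i₀, a i = b i := by
    intro i hlt
    by_contra hcon
    have : i₀ ≤ i := Nat.find_le hcon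
    omega
  refine ⟨i₀, ?_⟩
  rcases Nat.lt_or_ge (b i₀) (a i₀) with hlt | hge
  · exact Or.inl (master_half ha hb hval hpre hlt)
  · have hne0 : a i₀ ≠ b i₀ := Nat.find_spec hex
    have hlt : a i₀ < b i₀ := by omega
    exact Or.inr (master_half hb ha hval.symm (fun i h => (hpre i h).symm) hlt)

lemma dig2_master {a : ℕ → ℕ} (ha : ∀ i, a i = 0 ∨ a i = 2) :
    ∀ i, a i = 0 ∨ a i = 2 ∨ a i = 4 := fun i => by rcases ha i with h|h <;> omega

lemma cval_inj {a b : ℕ → ℕ} (ha : ∀ i, a i = 0 ∨ a i = 2) (hb : ∀ i, b i = 0 ∨ b i = 2)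
    (h : cval a = cval b) : a = b := by
  by_contra hne
  obtain ⟨i₀, h1 | h1⟩ := master (dig2_master ha) (dig2_master hb) h hne
  · have := (h1 (i₀ + 1) (by omega)).2
    rcases hb (i₀ + 1) with h'|h' <;> omega
  · have := (h1 (i₀ + 1) (by omega)).2
    rcases ha (i₀ + 1) with h'|h' <;> omega


/-! ### base 2 -/

def bval (b : ℕ → ℕ) : ℝ := ∑' i, (b i : ℝ) / 2 ^ (i + 1)

def btail (b : ℕ → ℕ) (m : ℕ) : ℝ := ∑' k, (b (k + m) : ℝ) / 2 ^ (k + m + 1)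

lemma geom2_aux (m : ℕ) (c : ℝ) :
    Summable (fun k : ℕ => c / 2 ^ (k + m + 1)) ∧
      (∑' k : ℕ, c / 2 ^ (k + m + 1)) = c / 2 ^ m := by
  have hs : Summable (fun k : ℕ => (1/2 : ℝ) ^ k) :=
    summable_geometric_of_lt_one (by norm_num) (by norm_num)
  have hfun : ∀ k : ℕ, c / 2 ^ (k + m + 1) = (c / 2 ^ (m + 1)) * (1/2 : ℝ) ^ k := by
    intro k
    have h1 : (2:ℝ) ^ (k + m + 1) = 2 ^ (m + 1) * 2 ^ k := by
      rw [← pow_add]; congr 1; omega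
    rw [h1, ← div_div, one_div, inv_pow, ← div_eq_mul_inv]
  constructor
  · simpa only [hfun] using hs.mul_left (c / 2 ^ (m + 1))
  · calc (∑' k : ℕ, c / 2 ^ (k + m + 1)) = ∑' k : ℕ, (c / 2 ^ (m + 1)) * (1/2 : ℝ) ^ k := by
          exact tsum_congr hfun
    _ = (c / 2 ^ (m + 1)) * (1 - 1/2)⁻¹ := by
          rw [tsum_mul_left, tsum_geometric_of_lt_one (by norm_num) (by norm_num)]
    _ = c / 2 ^ m := by rw [pow_succ]; field_simp; ring

lemma summable_bval_tail {b : ℕ → ℕ} {M : ℕ} (h : ∀ i, b i ≤ M) (m : ℕ) :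
    Summable (fun k : ℕ => (b (k + m) : ℝ) / 2 ^ (k + m + 1)) := by
  refine Summable.of_nonneg_of_le (fun k => by positivity) (fun k => ?_)
    ((geom2_aux m (M : ℝ)).1)
  gcongr
  exact_mod_cast h _

lemma summable_bval {b : ℕ → ℕ} {M : ℕ} (h : ∀ i, b i ≤ M) :
    Summable (fun i : ℕ => (b i : ℝ) / 2 ^ (i + 1)) := by
  simpa using summable_bval_tail h 0

lemma btail_nonneg (b : ℕ → ℕ) (m : ℕ) : 0 ≤ btail b m :=
  tsum_nonneg (fun k => by positivity)

lemma btail_le {b : ℕ → ℕ} {M : ℕ} (h : ∀ i, b i ≤ M) (m : ℕ) :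
    btail b m ≤ (M : ℝ) / 2 ^ m := by
  rw [← (geom2_aux m (M : ℝ)).2]
  refine (summable_bval_tail h m).tsum_le_tsum (fun k => ?_) (geom2_aux m (M:ℝ)).1
  gcongr
  exact_mod_cast h _

lemma bval_split {b : ℕ → ℕ} {M : ℕ} (h : ∀ i, b i ≤ M) (m : ℕ) :
    bval b = (∑ i ∈ Finset.range m, (b i : ℝ) / 2 ^ (i + 1)) + btail b m := by
  rw [bval, btail, ← Summable.sum_add_tsum_nat_add m (summable_bval h)]

lemma bval_nonneg (b : ℕ → ℕ) : 0 ≤ bval b := tsum_nonneg (fun k => by positivity)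

lemma bval_le {b : ℕ → ℕ} {M : ℕ} (h : ∀ i, b i ≤ M) : bval b ≤ (M : ℝ) := by
  have h1 := btail_le h 0
  have h0 := bval_split h 0
  simp only [Finset.range_zero, Finset.sum_empty, zero_add, pow_zero, div_one] at h0 h1
  rw [h0]; exact h1

/-- Existence of binary expansions. -/
lemma exists_binary {y : ℝ} (hy : y ∈ Set.Icc (0:ℝ) 1) :
    ∃ b : ℕ → ℕ, (∀ i, b i = 0 ∨ b i = 1) ∧ bval b = y := by
  obtain ⟨hy0, hy1⟩ := hy
  rcases eq_or_lt_of_le hy1 with h1 | h1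
  · refine ⟨fun _ => 1, fun i => Or.inr rfl, ?_⟩
    have := (geom2_aux 0 (1:ℝ)).2
    simp only [pow_zero, div_one] at this
    rw [bval, h1]
    rw [← this]
    exact tsum_congr (fun k => by norm_num)
  · set b : ℕ → ℕ := fun i => ⌊y * 2 ^ (i + 1)⌋₊ % 2 with hb
    have hb01 : ∀ i, b i = 0 ∨ b i = 1 := fun i => Nat.mod_two_eq_zero_or_one _
    have hbM : ∀ i, b i ≤ 1 := fun i => by rcases hb01 i with h|h <;> omega
    have hpartial : ∀ n, (∑ i ∈ Finset.range n, (b i : ℝ) / 2 ^ (i + 1))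
        = (⌊y * 2 ^ n⌋₊ : ℝ) / 2 ^ n := by
      intro n
      induction n with
      | zero => simp [Nat.floor_eq_zero.2 h1]
      | succ n ih =>
        rw [Finset.sum_range_succ, ih]
        have hdiv : ⌊y * 2 ^ (n + 1)⌋₊ / 2 = ⌊y * 2 ^ n⌋₊ := by
          rw [← Nat.floor_div_natCast]
          congr 1
          push_cast
          ring
        have hkey : (⌊y * 2 ^ (n + 1)⌋₊ : ℕ) = 2 * ⌊y * 2 ^ n⌋₊ + b n := by
          have hbn : b n = ⌊y * 2 ^ (n + 1)⌋₊ % 2 := rfl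
          omega
        have hkey' : ((⌊y * 2 ^ (n + 1)⌋₊ : ℕ) : ℝ) = 2 * (⌊y * 2 ^ n⌋₊ : ℝ) + (b n : ℝ) := by
          exact_mod_cast hkey
        rw [hkey']
        field_simp
        ring
    have hS : Filter.Tendsto (fun n => ∑ i ∈ Finset.range n, (b i : ℝ) / 2 ^ (i + 1))
        Filter.atTop (nhds y) := by
      have hup : ∀ n : ℕ, (∑ i ∈ Finset.range n, (b i : ℝ) / 2 ^ (i + 1)) ≤ y := by
        intro n
        rw [hpartial n]
        rw [div_le_iff₀ (by positivity)]
        exact Nat.floor_le (by positivity)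
      have hlow : ∀ n : ℕ, y - (1/2) ^ n ≤ ∑ i ∈ Finset.range n, (b i : ℝ) / 2 ^ (i + 1) := by
        intro n
        rw [hpartial n]
        have := Nat.lt_floor_add_one (y * 2 ^ n)
        rw [sub_le_iff_le_add, div_add' _ _ _ (by positivity), le_div_iff₀ (by positivity)]
        have h2 : (1/2:ℝ)^n * 2^n = 1 := by
          rw [div_pow, one_pow, div_mul_cancel₀]
          positivity
        nlinarith [this]
      have hlowlim : Filter.Tendsto (fun n : ℕ => y - (1/2:ℝ) ^ n) Filter.atTop (nhds y) := by
        have := tendsto_pow_atTop_nhds_zero_of_lt_one (by norm_num : (0:ℝ) ≤ 1/2) (by norm_num)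
        simpa using (tendsto_const_nhds (x := y)).sub this
      exact tendsto_of_tendsto_of_tendsto_of_le_of_le hlowlim tendsto_const_nhds hlow hup
    have hsum := (summable_bval hbM).hasSum.tendsto_sum_nat
    exact ⟨b, hb01, tendsto_nhds_unique hsum hS⟩


/-! ### the Cantor set and its dimension -/

/-- target dimension -/
def rr : ℝ := Real.log 2 / Real.log 3

lemma hlog3 : 0 < Real.log 3 := Real.log_pos (by norm_num)

lemma hrr_pos : 0 < rr := div_pos (Real.log_pos (by norm_num)) hlog3

lemma mem_linCantor_iff {x : ℝ} :
    x ∈ linCantor 3 {0, 2} ↔ ∃ a : ℕ → ℕ, (∀ i, a i = 0 ∨ a i = 2) ∧ x = cval a := by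
  constructor
  · rintro ⟨a, h1, h2⟩
    refine ⟨a, fun i => by simpa using h1 i, ?_⟩
    rw [h2, cval]; exact tsum_congr (fun i => by norm_num)
  · rintro ⟨a, h1, h2⟩
    refine ⟨a, fun i => by simpa using h1 i, ?_⟩
    rw [h2, cval]; exact tsum_congr (fun i => by norm_num)

open scoped Classical in
def cdig (x : ℝ) : ℕ → ℕ :=
  if h : ∃ a : ℕ → ℕ, (∀ i, a i = 0 ∨ a i = 2) ∧ x = cval a then h.choose else fun _ => 0

lemma cdig_spec {x : ℝ} (hx : x ∈ linCantor 3 {0, 2}) :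
    (∀ i, cdig x i = 0 ∨ cdig x i = 2) ∧ x = cval (cdig x) := by
  rw [mem_linCantor_iff] at hx
  rw [cdig]
  rw [dif_pos hx]
  exact hx.choose_spec

def cantorF (x : ℝ) : ℝ := bval (fun i => cdig x i / 2)

lemma cantorF_image : Set.Icc (0:ℝ) 1 ⊆ cantorF '' (linCantor 3 {0, 2}) := by
  intro y hy
  obtain ⟨b, hb01, hbv⟩ := exists_binary hy
  set a : ℕ → ℕ := fun i => 2 * b i with ha
  have ha02 : ∀ i, a i = 0 ∨ a i = 2 := fun i => by rcases hb01 i with h|h <;> simp [ha, h]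
  have hx : cval a ∈ linCantor 3 {0, 2} := mem_linCantor_iff.2 ⟨a, ha02, rfl⟩
  refine ⟨cval a, hx, ?_⟩
  have hd := cdig_spec hx
  have h1 : cdig (cval a) = a := cval_inj hd.1 ha02 hd.2.symm
  rw [cantorF, h1]
  have h2 : (fun i => a i / 2) = b := by funext i; simp only [ha]; omega
  rw [h2, hbv]

lemma dist_lower {a b : ℕ → ℕ} (ha : ∀ i, a i = 0 ∨ a i = 2) (hb : ∀ i, b i = 0 ∨ b i = 2)
    {i₀ : ℕ} (hpre : ∀ i < i₀, a i = b i) (h2 : a i₀ = 2) (h0 : b i₀ = 0) :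
    1 / 3 ^ (i₀ + 1) ≤ cval a - cval b := by
  have haM : ∀ i, a i ≤ 2 := fun i => by rcases ha i with h|h <;> omega
  have hbM : ∀ i, b i ≤ 2 := fun i => by rcases hb i with h|h <;> omega
  have hsa := cval_split haM i₀
  have hsb := cval_split hbM i₀
  have hta := ctail_step haM i₀
  have htb := ctail_step hbM i₀
  have hpres : (∑ i ∈ Finset.range i₀, (a i : ℝ) / 3 ^ (i + 1)) =
      ∑ i ∈ Finset.range i₀, (b i : ℝ) / 3 ^ (i + 1) :=
    Finset.sum_congr rfl (fun i hi => by rw [hpre i (Finset.mem_range.1 hi)])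
  have hbt : ctail b (i₀ + 1) ≤ 1 / 3 ^ (i₀ + 1) := by
    have := ctail_le hbM (i₀ + 1); norm_num at this ⊢; linarith
  have hat : 0 ≤ ctail a (i₀ + 1) := ctail_nonneg _ _
  have h2' : (a i₀ : ℝ) = 2 := by exact_mod_cast congrArg (Nat.cast (R := ℝ)) h2
  have h0' : (b i₀ : ℝ) = 0 := by exact_mod_cast congrArg (Nat.cast (R := ℝ)) h0
  have hpow : (0:ℝ) < 3 ^ (i₀ + 1) := by positivity
  rw [hsa, hsb, hta, htb, hpres, h2', h0', zero_div]
  have : (2:ℝ) / 3 ^ (i₀ + 1) - 1 / 3 ^ (i₀ + 1) = 1 / 3 ^ (i₀ + 1) := by ring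
  linarith

lemma rpow_key (m : ℕ) : ((1:ℝ) / 3 ^ m) ^ rr = 1 / 2 ^ m := by
  have h3 : (0:ℝ) < 3 := by norm_num
  have h2 : (0:ℝ) < 2 := by norm_num
  have hlog3' : Real.log 3 ≠ 0 := ne_of_gt hlog3
  have e1 : ((1:ℝ) / 3 ^ m) = ((1:ℝ)/3) ^ m := by rw [div_pow, one_pow]
  have e2 : ((1:ℝ) / 2 ^ m) = ((1:ℝ)/2) ^ m := by rw [div_pow, one_pow]
  rw [e1, e2, ← Real.rpow_natCast ((1:ℝ)/3) m, ← Real.rpow_natCast ((1:ℝ)/2) m,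
    ← Real.rpow_mul (by norm_num : (0:ℝ) ≤ 1/3)]
  rw [Real.rpow_def_of_pos (by norm_num : (0:ℝ) < 1/3),
    Real.rpow_def_of_pos (by norm_num : (0:ℝ) < 1/2)]
  congr 1
  rw [one_div, one_div, Real.log_inv, Real.log_inv]
  rw [rr]
  field_simp

lemma cantorF_dist {x y : ℝ} (hx : x ∈ linCantor 3 {0, 2}) (hy : y ∈ linCantor 3 {0, 2}) :
    dist (cantorF x) (cantorF y) ≤ 2 * dist x y ^ rr := by
  rcases eq_or_ne x y with rfl | hne
  · simp only [dist_self]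
    positivity
  obtain ⟨ha, hxa⟩ := cdig_spec hx
  obtain ⟨hb, hyb⟩ := cdig_spec hy
  set a := cdig x
  set b := cdig y
  have hab : a ≠ b := fun h => hne (by rw [hxa, hyb, h])
  have hex : ∃ j, a j ≠ b j := Function.ne_iff.1 hab
  set i₀ := Nat.find hex with hi
  have hpre : ∀ i < i₀, a i = b i := by
    intro i hlt
    by_contra hcon
    have : i₀ ≤ i := Nat.find_le hcon
    omega
  have hd0 : a i₀ ≠ b i₀ := Nat.find_spec hex
  -- lower bound on dist x y
  have hdl : 1 / 3 ^ (i₀ + 1) ≤ dist x y := by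
    rw [Real.dist_eq]
    rcases ha i₀ with h1 | h1 <;> rcases hb i₀ with h2 | h2
    · omega
    · have := dist_lower hb ha (fun i hi => (hpre i hi).symm) h2 h1
      rw [abs_sub_comm, hxa, hyb]
      exact this.trans (le_abs_self _)
    · have := dist_lower ha hb hpre h1 h2
      rw [hxa, hyb]
      exact this.trans (le_abs_self _)
    · omega
  -- upper bound on dist of images
  have hFu : dist (cantorF x) (cantorF y) ≤ 1 / 2 ^ i₀ := by
    set u : ℕ → ℕ := fun i => a i / 2 with hu
    set v : ℕ → ℕ := fun i => b i / 2 with hv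
    have huM : ∀ i, u i ≤ 1 := fun i => by simp only [hu]; rcases ha i with h|h <;> omega
    have hvM : ∀ i, v i ≤ 1 := fun i => by simp only [hv]; rcases hb i with h|h <;> omega
    have hsu := bval_split huM i₀
    have hsv := bval_split hvM i₀
    have hpres : (∑ i ∈ Finset.range i₀, (u i : ℝ) / 2 ^ (i + 1)) =
        ∑ i ∈ Finset.range i₀, (v i : ℝ) / 2 ^ (i + 1) := by
      refine Finset.sum_congr rfl (fun i hi => ?_)
      have := hpre i (Finset.mem_range.1 hi)
      simp only [hu, hv, this]
    have h1 : btail u i₀ ≤ 1 / 2 ^ i₀ := by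
      have := btail_le huM i₀; norm_num at this ⊢; linarith
    have h2 : btail v i₀ ≤ 1 / 2 ^ i₀ := by
      have := btail_le hvM i₀; norm_num at this ⊢; linarith
    have h3 : 0 ≤ btail u i₀ := btail_nonneg _ _
    have h4 : 0 ≤ btail v i₀ := btail_nonneg _ _
    rw [Real.dist_eq, cantorF, cantorF, ← hu, ← hv, hsu, hsv, hpres]
    rw [abs_le]
    constructor <;> linarith
  -- combine
  have hkey : (1:ℝ) / 2 ^ i₀ ≤ 2 * dist x y ^ rr := by
    have h5 : ((1:ℝ) / 3 ^ (i₀ + 1)) ^ rr ≤ dist x y ^ rr :=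
      Real.rpow_le_rpow (by positivity) hdl hrr_pos.le
    rw [rpow_key (i₀ + 1)] at h5
    have : (2:ℝ) * (1 / 2 ^ (i₀ + 1)) = 1 / 2 ^ i₀ := by
      rw [pow_succ]; field_simp
    linarith
  linarith

lemma cantorF_holder : HolderOnWith 2 rr.toNNReal cantorF (linCantor 3 {0, 2}) := by
  intro x hx y hy
  rw [edist_dist, edist_dist]
  calc ENNReal.ofReal (dist (cantorF x) (cantorF y))
      ≤ ENNReal.ofReal (2 * dist x y ^ rr) := ENNReal.ofReal_le_ofReal (cantorF_dist hx hy)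
    _ = 2 * ENNReal.ofReal (dist x y) ^ (rr.toNNReal : ℝ) := by
        rw [ENNReal.ofReal_mul (by norm_num : (0:ℝ) ≤ 2)]
        rw [ENNReal.ofReal_rpow_of_nonneg dist_nonneg (by positivity : (0:ℝ) ≤ (rr.toNNReal : ℝ))]
        rw [Real.coe_toNNReal _ hrr_pos.le]
        norm_num

lemma le_dimH_C : ENNReal.ofReal rr ≤ dimH (linCantor 3 {0, 2}) := by
  have h1 : dimH (Set.Icc (0:ℝ) 1) = 1 := by
    rw [Real.dimH_of_nonempty_interior (by rw [interior_Icc]; exact ⟨1/2, by norm_num⟩)]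
    norm_num
  have hrpos : 0 < rr.toNNReal := Real.toNNReal_pos.2 hrr_pos
  have h2 := cantorF_holder.dimH_image_le hrpos
  have h3 : dimH (Set.Icc (0:ℝ) 1) ≤ dimH (cantorF '' linCantor 3 {0, 2}) :=
    dimH_mono cantorF_image
  have h4 : (1:ℝ≥0∞) ≤ dimH (linCantor 3 {0, 2}) / rr.toNNReal := by
    rw [← h1]; exact h3.trans h2
  have h5 := (ENNReal.le_div_iff_mul_le
    (Or.inl (by exact_mod_cast hrpos.ne'))
    (Or.inl ENNReal.coe_ne_top)).1 h4
  rw [one_mul] at h5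
  exact h5

lemma measure_zero_of_C {d : ℝ} (hd : rr < d) : μH[d] (linCantor 3 {0, 2}) = 0 := by
  have hd0 : 0 < d := lt_trans hrr_pos hd
  -- the covering
  set t : ∀ n : ℕ, (Fin n → Fin 2) → Set ℝ := fun n w =>
    Set.Icc (∑ i : Fin n, (2 * (w i : ℕ) : ℝ) / 3 ^ ((i : ℕ) + 1))
      ((∑ i : Fin n, (2 * (w i : ℕ) : ℝ) / 3 ^ ((i : ℕ) + 1)) + 1 / 3 ^ n) with ht
  have hdiam : ∀ n (w : Fin n → Fin 2),
      Metric.ediam (t n w) = ENNReal.ofReal (1 / 3 ^ n) := by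
    intro n w
    rw [ht]
    simp only
    rw [Real.ediam_Icc]
    congr 1
    ring
  have hcover : ∀ n, linCantor 3 {0, 2} ⊆ ⋃ w : Fin n → Fin 2, t n w := by
    intro n x hx
    obtain ⟨a, ha, hxa⟩ := mem_linCantor_iff.1 hx
    have haM : ∀ i, a i ≤ 2 := fun i => by rcases ha i with h|h <;> omega
    set w : Fin n → Fin 2 := fun i => ⟨a i / 2, by rcases ha (i : ℕ) with h|h <;> omega⟩ with hw
    refine Set.mem_iUnion.2 ⟨w, ?_⟩
    have hweq : (∑ i : Fin n, (2 * (w i : ℕ) : ℝ) / 3 ^ ((i : ℕ) + 1)) =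
        ∑ i ∈ Finset.range n, (a i : ℝ) / 3 ^ (i + 1) := by
      rw [Finset.sum_range fun i => (a i : ℝ) / 3 ^ (i + 1)]
      refine Finset.sum_congr rfl (fun i _ => ?_)
      have : 2 * ((w i : ℕ)) = a i := by
        simp only [hw]; rcases ha (i : ℕ) with h|h <;> omega
      rw [← this]
      push_cast
      ring_nf
    have hsplit := cval_split haM n
    have h1 : 0 ≤ ctail a n := ctail_nonneg _ _
    have h2 : ctail a n ≤ 1 / 3 ^ n := by
      have := ctail_le haM n; norm_num at this ⊢; linarith
    rw [ht]
    simp only [Set.mem_Icc, hweq]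
    constructor <;> rw [hxa, hsplit] <;> linarith
  set q : ℝ := 2 * (1/3 : ℝ) ^ d with hq
  have hq0 : 0 ≤ q := by rw [hq]; positivity
  have hq1 : q < 1 := by
    have h13 : ((1:ℝ)/3) ^ d < (1/3 : ℝ) ^ rr :=
      Real.rpow_lt_rpow_of_exponent_gt (by norm_num) (by norm_num) hd
    have h12 : ((1:ℝ)/3) ^ rr = 1/2 := by
      have := rpow_key 1
      norm_num at this
      simpa using this
    rw [hq]
    rw [h12] at h13
    linarith
  have hsum : ∀ n : ℕ, (∑ _w : Fin n → Fin 2, ENNReal.ofReal (1 / 3 ^ n) ^ d)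
      = ENNReal.ofReal (q ^ n) := by
    intro n
    rw [Finset.sum_const, Finset.card_univ]
    have hcard : Fintype.card (Fin n → Fin 2) = 2 ^ n := by
      rw [Fintype.card_fun]; simp
    rw [hcard, nsmul_eq_mul]
    rw [ENNReal.ofReal_rpow_of_nonneg (by positivity) hd0.le]
    have he : ((2:ℝ≥0∞) ^ n) = ENNReal.ofReal ((2:ℝ) ^ n) := by
      rw [ENNReal.ofReal_pow (by norm_num)]
      norm_num
    push_cast
    rw [he, ← ENNReal.ofReal_mul (by positivity)]
    congr 1
    rw [hq, mul_pow]
    congr 1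
    rw [show (1:ℝ)/3^n = ((1:ℝ)/3)^n by rw [div_pow, one_pow],
       ← Real.rpow_natCast ((1:ℝ)/3) n, ← Real.rpow_mul (by norm_num), mul_comm,
       Real.rpow_mul (by norm_num), Real.rpow_natCast]
  have htendsto : Filter.Tendsto (fun n : ℕ => ENNReal.ofReal (q ^ n))
      Filter.atTop (nhds 0) := by
    rw [← ENNReal.ofReal_zero]
    exact ENNReal.tendsto_ofReal (tendsto_pow_atTop_nhds_zero_of_lt_one hq0 hq1)
  have hbound := Measure.hausdorffMeasure_le_liminf_sum (l := Filter.atTop) d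
    (linCantor 3 {0, 2}) (fun n => ENNReal.ofReal (1 / 3 ^ n)) ?_ t ?_ ?_
  · refine le_antisymm ?_ zero_le
    refine hbound.trans ?_
    have : (fun n => ∑ w : Fin n → Fin 2, Metric.ediam (t n w) ^ d) =
        fun n => ENNReal.ofReal (q ^ n) := by
      funext n
      rw [← hsum n]
      exact Finset.sum_congr rfl (fun w _ => by rw [hdiam])
    rw [this, htendsto.liminf_eq]
  · rw [← ENNReal.ofReal_zero]
    apply ENNReal.tendsto_ofReal
    have : (fun n : ℕ => (1:ℝ) / 3 ^ n) = fun n : ℕ => (1/3 : ℝ) ^ n := by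
      funext n; rw [div_pow, one_pow]
    rw [this]
    exact tendsto_pow_atTop_nhds_zero_of_lt_one (by norm_num) (by norm_num)
  · exact Filter.Eventually.of_forall (fun n i => le_of_eq (hdiam n i))
  · exact Filter.Eventually.of_forall hcover

lemma dimH_C_le : dimH (linCantor 3 {0, 2}) ≤ ENNReal.ofReal rr := by
  apply dimH_le
  intro d' hd'
  by_contra hcon
  push_neg at hcon
  have h2 : rr < (d' : ℝ) := (ENNReal.ofReal_lt_coe_iff hrr_pos.le).1 hcon
  rw [measure_zero_of_C h2] at hd'
  exact (by simp : (0:ℝ≥0∞) ≠ ∞) hd'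


/-! ### the doubled Cantor set -/

def Dset : Set ℝ := {z | ∃ c : ℕ → ℕ, (∀ i, c i = 0 ∨ c i = 4) ∧ z = cval c}

lemma cval_add (a b : ℕ → ℕ) {M : ℕ} (ha : ∀ i, a i ≤ M) (hb : ∀ i, b i ≤ M) :
    cval (fun i => a i + b i) = cval a + cval b := by
  rw [cval, cval, cval, ← Summable.tsum_add (summable_cval ha) (summable_cval hb)]
  exact tsum_congr (fun i => by push_cast; ring)

lemma cval_double (a : ℕ → ℕ) {M : ℕ} (ha : ∀ i, a i ≤ M) :
    cval (fun i => 2 * a i) = 2 * cval a := by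
  have h2 : ∀ i, 2 * a i = a i + a i := fun i => by ring
  rw [show (fun i => 2 * a i) = fun i => a i + a i from funext h2, cval_add a a ha ha]
  ring

lemma lipschitz_two : LipschitzWith 2 (fun x : ℝ => 2 * x) := by
  apply LipschitzWith.of_dist_le_mul
  intro x y
  rw [Real.dist_eq, Real.dist_eq, show (2:ℝ) * x - 2 * y = 2 * (x - y) by ring, abs_mul]
  norm_num

lemma lipschitz_half : LipschitzWith 1 (fun x : ℝ => x / 2) := by
  apply LipschitzWith.of_dist_le_mul
  intro x y
  rw [Real.dist_eq, Real.dist_eq, show x / 2 - y / 2 = (x - y) / 2 by ring, abs_div]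
  rw [abs_two]
  norm_num

lemma Dset_eq_image : Dset = (fun x : ℝ => 2 * x) '' linCantor 3 {0, 2} := by
  ext z
  constructor
  · rintro ⟨c, hc, rfl⟩
    have hc2 : ∀ i, c i / 2 = 0 ∨ c i / 2 = 2 := fun i => by rcases hc i with h|h <;> simp [h]
    have he : c = fun i => 2 * (c i / 2) := funext fun i => by rcases hc i with h|h <;> simp [h]
    refine ⟨cval (fun i => c i / 2), mem_linCantor_iff.2 ⟨_, hc2, rfl⟩, ?_⟩
    simp only
    rw [← cval_double (fun i => c i / 2) (M := 2) (fun i => by rcases hc i with h|h <;> simp [h])]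
    rw [← he]
  · rintro ⟨x, hx, rfl⟩
    obtain ⟨a, ha, rfl⟩ := mem_linCantor_iff.1 hx
    have haM : ∀ i, a i ≤ 2 := fun i => by rcases ha i with h|h <;> omega
    refine ⟨fun i => 2 * a i, fun i => by rcases ha i with h|h <;> simp [h], ?_⟩
    simp only
    rw [cval_double a haM]

lemma dimH_Dset_le : dimH Dset ≤ ENNReal.ofReal rr := by
  rw [Dset_eq_image]
  exact (lipschitz_two.dimH_image_le _).trans dimH_C_le

lemma le_dimH_Dset : ENNReal.ofReal rr ≤ dimH Dset := by
  have hsub : linCantor 3 {0, 2} ⊆ (fun x : ℝ => x / 2) '' Dset := by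
    intro x hx
    obtain ⟨a, ha, rfl⟩ := mem_linCantor_iff.1 hx
    have haM : ∀ i, a i ≤ 2 := fun i => by rcases ha i with h|h <;> omega
    refine ⟨2 * cval a, ?_, by ring⟩
    rw [← cval_double a haM]
    exact ⟨fun i => 2 * a i, fun i => by rcases ha i with h|h <;> simp [h], rfl⟩
  calc ENNReal.ofReal rr ≤ dimH (linCantor 3 {0, 2}) := le_dimH_C
    _ ≤ dimH ((fun x : ℝ => x / 2) '' Dset) := dimH_mono hsub
    _ ≤ dimH Dset := lipschitz_half.dimH_image_le _

/-! ### countably many exceptional points -/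

def EvConst : Set (ℕ → ℕ) := {c | ∃ N v : ℕ, ∀ k, N ≤ k → c k = v}

lemma countable_EvConst : EvConst.Countable := by
  have : EvConst = ⋃ (N : ℕ) (v : ℕ), {c : ℕ → ℕ | ∀ k, N ≤ k → c k = v} := by
    ext c
    simp only [EvConst, Set.mem_setOf_eq, Set.mem_iUnion]
  rw [this]
  refine Set.countable_iUnion (fun N => Set.countable_iUnion (fun v => ?_))
  set g : (Fin N → ℕ) → (ℕ → ℕ) := fun u k => if h : k < N then u ⟨k, h⟩ else v with hg
  have hsub : {c : ℕ → ℕ | ∀ k, N ≤ k → c k = v} ⊆ Set.range g := by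
    intro c hc
    refine ⟨fun i => c i, funext fun k => ?_⟩
    simp only [hg]
    split_ifs with h
    · rfl
    · exact (hc k (by omega)).symm
  exact (Set.countable_range g).mono hsub

/-! ### the uniqueness set -/

def Uset : Set ℝ := {z : ℝ | z ∈ Set.Icc (0 : ℝ) 2 ∧
  ∃! p : ℝ × ℝ, p.1 ∈ linCantor 3 {0, 2} ∧ p.2 ∈ linCantor 3 {0, 2} ∧
    p.1 ≤ p.2 ∧ p.1 + p.2 = z}

lemma good_mem_Uset {c : ℕ → ℕ} (hc : ∀ i, c i = 0 ∨ c i = 4)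
    (h0 : ∀ N, ∃ k, N ≤ k ∧ c k ≠ 0) (h4 : ∀ N, ∃ k, N ≤ k ∧ c k ≠ 4) :
    cval c ∈ Uset := by
  have hcM : ∀ i, c i ≤ 4 := fun i => by rcases hc i with h|h <;> omega
  set a : ℕ → ℕ := fun i => c i / 2 with ha
  have ha02 : ∀ i, a i = 0 ∨ a i = 2 := fun i => by
    simp only [ha]; rcases hc i with h|h <;> simp [h]
  have haM : ∀ i, a i ≤ 2 := fun i => by rcases ha02 i with h|h <;> omega
  have hsum : cval a + cval a = cval c := by
    rw [← cval_add a a haM haM]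
    congr 1
    funext i
    simp only [ha]
    rcases hc i with h|h <;> simp [h]
  constructor
  · constructor
    · exact cval_nonneg c
    · have := cval_le hcM; norm_num at this ⊢; linarith
  · refine ⟨(cval a, cval a), ⟨mem_linCantor_iff.2 ⟨a, ha02, rfl⟩,
      mem_linCantor_iff.2 ⟨a, ha02, rfl⟩, le_refl _, hsum⟩, ?_⟩
    rintro ⟨x, y⟩ ⟨hx, hy, _, hxy⟩
    obtain ⟨a', ha', rfl⟩ := mem_linCantor_iff.1 hx
    obtain ⟨b', hb', rfl⟩ := mem_linCantor_iff.1 hy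
    have ha'M : ∀ i, a' i ≤ 2 := fun i => by rcases ha' i with h|h <;> omega
    have hb'M : ∀ i, b' i ≤ 2 := fun i => by rcases hb' i with h|h <;> omega
    set d : ℕ → ℕ := fun i => a' i + b' i with hd
    have hd024 : ∀ i, d i = 0 ∨ d i = 2 ∨ d i = 4 := fun i => by
      simp only [hd]; rcases ha' i with h|h <;> rcases hb' i with h'|h' <;> omega
    have hdv : cval d = cval c := by
      rw [hd, cval_add a' b' ha'M hb'M, hxy]
    have hdc : d = c := by
      by_contra hne
      obtain ⟨i₀, h1 | h1⟩ := master hd024 (fun i => by rcases hc i with h|h <;> omega) hdv hne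
      · obtain ⟨k, hk1, hk2⟩ := h4 (i₀ + 1)
        exact hk2 (h1 k (by omega)).2
      · obtain ⟨k, hk1, hk2⟩ := h0 (i₀ + 1)
        exact hk2 (h1 k (by omega)).1
    have hab : ∀ i, a' i = a i ∧ b' i = a i := by
      intro i
      have h1 : a' i + b' i = c i := by rw [← hdc]
      have h2 := ha' i
      have h3 := hb' i
      have h4 := hc i
      constructor <;> simp only [ha] <;> omega
    have hax : a' = a := funext fun i => (hab i).1
    have hbx : b' = a := funext fun i => (hab i).2
    rw [hax, hbx]

/-- every point of `Dset` whose digits are not eventually constant is in `Uset` -/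
lemma Dset_subset : Dset ⊆ Uset ∪ cval '' EvConst := by
  rintro z ⟨c, hc, rfl⟩
  by_cases hE : c ∈ EvConst
  · exact Or.inr ⟨c, hE, rfl⟩
  · left
    apply good_mem_Uset hc
    · intro N
      by_contra hcon
      push_neg at hcon
      exact hE ⟨N, 0, fun k hk => by have := hcon k hk; omega⟩
    · intro N
      by_contra hcon
      push_neg at hcon
      exact hE ⟨N, 4, fun k hk => by have := hcon k hk; omega⟩

lemma le_dimH_Uset : ENNReal.ofReal rr ≤ dimH Uset := by
  have h1 : dimH Dset ≤ max (dimH Uset) (dimH (cval '' EvConst)) := by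
    rw [← dimH_union]
    exact dimH_mono Dset_subset
  have h2 : dimH (cval '' EvConst) = 0 := dimH_countable (countable_EvConst.image cval)
  rw [h2, max_eq_left zero_le] at h1
  exact le_dimH_Dset.trans h1

/-! ### upper bound for the uniqueness set -/

lemma Uset_subset : Uset ⊆ Dset ∪ ⋃ m : ℕ, (fun x : ℝ => x + 2 / 3 ^ (m + 1)) '' Dset := by
  rintro z ⟨_, ⟨p, ⟨hp1, hp2, hple, hpsum⟩, huniq⟩⟩
  obtain ⟨a, ha, hpa⟩ := mem_linCantor_iff.1 hp1
  obtain ⟨b, hb, hpb⟩ := mem_linCantor_iff.1 hp2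
  have haM : ∀ i, a i ≤ 2 := fun i => by rcases ha i with h|h <;> omega
  have hbM : ∀ i, b i ≤ 2 := fun i => by rcases hb i with h|h <;> omega
  -- at most one digit difference
  have key : ∀ i j, i ≠ j → a i ≠ b i → a j ≠ b j → False := by
    intro i j hij hai haj
    set a' := Function.update a i (b i) with ha'
    set b' := Function.update b i (a i) with hb'
    have ha'd : ∀ k, a' k = 0 ∨ a' k = 2 := by
      intro k
      rw [ha', Function.update_apply]
      split_ifs
      · exact hb i
      · exact ha k
    have hb'd : ∀ k, b' k = 0 ∨ b' k = 2 := by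
      intro k
      rw [hb', Function.update_apply]
      split_ifs
      · exact ha i
      · exact hb k
    have ha'M : ∀ k, a' k ≤ 2 := fun k => by rcases ha'd k with h|h <;> omega
    have hb'M : ∀ k, b' k ≤ 2 := fun k => by rcases hb'd k with h|h <;> omega
    have hsum' : cval a' + cval b' = z := by
      rw [← cval_add a' b' ha'M hb'M]
      have : (fun k => a' k + b' k) = fun k => a k + b k := by
        funext k
        rw [ha', hb', Function.update_apply, Function.update_apply]
        split_ifs with h
        · subst h; ring
        · rfl
      rw [this, cval_add a b haM hbM, ← hpa, ← hpb, hpsum]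
    have hx'1 : cval a' ≠ p.1 := by
      intro hcon
      rw [hpa] at hcon
      have := cval_inj ha'd ha hcon
      have h2 : a' i = a i := by rw [this]
      rw [ha', Function.update_self] at h2
      exact hai h2.symm
    have hx'2 : cval a' ≠ p.2 := by
      intro hcon
      rw [hpb] at hcon
      have := cval_inj ha'd hb hcon
      have h2 : a' j = b j := by rw [this]
      rw [ha', Function.update_of_ne (Ne.symm hij)] at h2
      exact haj h2
    have hmem1 : cval a' ∈ linCantor 3 {0, 2} := mem_linCantor_iff.2 ⟨a', ha'd, rfl⟩
    have hmem2 : cval b' ∈ linCantor 3 {0, 2} := mem_linCantor_iff.2 ⟨b', hb'd, rfl⟩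
    by_cases hle : cval a' ≤ cval b'
    · have hq := huniq (cval a', cval b') ⟨hmem1, hmem2, hle, hsum'⟩
      exact hx'1 (congrArg Prod.fst hq)
    · have hq := huniq (cval b', cval a') ⟨hmem2, hmem1, le_of_not_ge hle, by
        rw [add_comm]; exact hsum'⟩
      exact hx'2 (congrArg Prod.snd hq)
  by_cases hab : ∀ i, a i = b i
  · left
    have hABeq : a = b := funext hab
    refine ⟨fun i => a i + b i, fun i => ?_, ?_⟩
    · show a i + b i = 0 ∨ a i + b i = 4
      have := hab i
      rcases ha i with h|h <;> omega
    · rw [cval_add a b haM hbM, ← hpa, ← hpb, hpsum]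
  · right
    push_neg at hab
    obtain ⟨m, hm⟩ := hab
    have honly : ∀ j, j ≠ m → a j = b j := by
      intro j hj
      by_contra hcon
      exact key m j (Ne.symm hj) hm hcon
    set c : ℕ → ℕ := fun i => if i = m then 0 else a i + b i with hcdef
    have hc : ∀ i, c i = 0 ∨ c i = 4 := by
      intro i
      simp only [hcdef]
      split_ifs with h
      · left; rfl
      · have := honly i h
        rcases ha i with h'|h' <;> omega
    have hcM : ∀ i, c i ≤ 4 := fun i => by rcases hc i with h|h <;> omega
    refine Set.mem_iUnion.2 ⟨m, cval c, ⟨c, hc, rfl⟩, ?_⟩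
    simp only
    have habm : a m + b m = 2 := by rcases ha m with h|h <;> rcases hb m with h'|h' <;> omega
    have hz : z = cval (fun i => a i + b i) := by
      rw [cval_add a b haM hbM, ← hpa, ← hpb, hpsum]
    have hsummand : ∀ i : ℕ, ((a i + b i : ℕ) : ℝ) / 3 ^ (i + 1) =
        (c i : ℝ) / 3 ^ (i + 1) + (if i = m then (2:ℝ) / 3 ^ (m + 1) else 0) := by
      intro i
      simp only [hcdef]
      split_ifs with h
      · subst h
        rw [habm]
        norm_num
      · norm_num
    have hite : Summable (fun i : ℕ => if i = m then (2:ℝ) / 3 ^ (m + 1) else 0) :=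
      summable_of_ne_finset_zero (s := {m}) (fun i hi => by
        simp only [Finset.mem_singleton] at hi
        simp [hi])
    have : cval (fun i => a i + b i) = cval c + 2 / 3 ^ (m + 1) := by
      rw [cval, cval]
      rw [show (∑' i, ((fun i => a i + b i) i : ℝ) / 3 ^ (i + 1)) =
        ∑' i, ((c i : ℝ) / 3 ^ (i + 1) + (if i = m then (2:ℝ) / 3 ^ (m + 1) else 0)) from
        tsum_congr hsummand]
      rw [Summable.tsum_add (summable_cval hcM) hite, tsum_ite_eq m (fun _ => (2:ℝ) / 3 ^ (m + 1))]
    rw [hz, this]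

lemma dimH_Uset_le : dimH Uset ≤ ENNReal.ofReal rr := by
  have h1 := dimH_mono Uset_subset
  rw [dimH_union, dimH_iUnion] at h1
  have h2 : ∀ m : ℕ, dimH ((fun x : ℝ => x + 2 / 3 ^ (m + 1)) '' Dset) = dimH Dset := by
    intro m
    exact Isometry.dimH_image (Isometry.of_dist_eq fun x y => dist_add_right x y _) Dset
  refine h1.trans ?_
  apply max_le
  · exact dimH_Dset_le
  · refine iSup_le (fun m => ?_)
    rw [h2 m]
    exact dimH_Dset_le

/-- The set of `z ∈ [0,2]` with a unique unordered representation `z = x + y`,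
`x, y` in the middle-third Cantor set, has Hausdorff dimension `log 2 / log 3`. -/
theorem dimH_uniqueness_set :
    dimH {z : ℝ | z ∈ Set.Icc (0 : ℝ) 2 ∧
      ∃! p : ℝ × ℝ, p.1 ∈ linCantor 3 {0, 2} ∧ p.2 ∈ linCantor 3 {0, 2} ∧
        p.1 ≤ p.2 ∧ p.1 + p.2 = z} = ENNReal.ofReal (Real.log 2 / Real.log 3) := by
  exact le_antisymm dimH_Uset_le le_dimH_Uset

end
end

section
/- For every n ≥ 2 there exists A ⊆ {0,1,...,n-1} with 0, n-1 ∈ A, #A ≤ 3(⌈√n⌉ + 1), and C_{A,n} + C_{A,n} = [0,2]. -/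
open Pointwise

private lemma nlt' (n : ℕ) (hn : 2 ≤ n) : (1:ℝ) < n := by
  exact_mod_cast hn.trans_lt' Nat.one_lt_two

private lemma summable_digits (n : ℕ) (hn : 2 ≤ n) (a : ℕ → ℕ) (C : ℕ) (hC : ∀ i, a i ≤ C) :
    Summable (fun i => (a i : ℝ) / n ^ (i + 1)) := by
  have hn1 : (1:ℝ) < n := nlt' n hn
  have hn0 : (0:ℝ) < n := by linarith
  have h1 : (1:ℝ)/n < 1 := by rw [div_lt_one hn0]; exact hn1
  have hsum : Summable (fun i : ℕ => (C : ℝ) * (1/(n:ℝ)) ^ i) :=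
    (summable_geometric_of_lt_one (by positivity) h1).mul_left _
  refine Summable.of_nonneg_of_le (fun i => by positivity) (fun i => ?_) hsum
  have h2 : (a i : ℝ) / n ^ (i+1) ≤ (C:ℝ) / n ^ i := by
    apply div_le_div₀ (by positivity) (by exact_mod_cast hC i) (by positivity)
    exact pow_le_pow_right₀ hn1.le (by omega)
  calc (a i : ℝ) / n ^ (i+1) ≤ (C:ℝ) / n ^ i := h2
    _ = (C:ℝ) * (1/(n:ℝ)) ^ i := by rw [one_div, inv_pow, ← div_eq_mul_inv]

private lemma hasSum_top (n : ℕ) (hn : 2 ≤ n) :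
    HasSum (fun i : ℕ => ((n:ℝ) - 1) / n ^ (i + 1)) 1 := by
  have hn1 : (1:ℝ) < n := nlt' n hn
  have hn0 : (0:ℝ) < n := by linarith
  have h1 : (1:ℝ)/n < 1 := by rw [div_lt_one hn0]; exact hn1
  have h := (hasSum_geometric_of_lt_one (by positivity) h1).mul_left (((n:ℝ)-1)/n)
  have heq : (fun i : ℕ => ((n:ℝ)-1)/n * (1/(n:ℝ))^i) = fun i : ℕ => ((n:ℝ)-1)/n^(i+1) := by
    funext i
    rw [div_pow, one_pow, div_mul_div_comm, mul_one, ← pow_succ']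
  have hval : ((n:ℝ)-1)/n * (1 - 1/(n:ℝ))⁻¹ = 1 := by
    have hne : (n:ℝ) - 1 ≠ 0 := by linarith
    have hne0 : (n:ℝ) ≠ 0 := by linarith
    field_simp
  rw [heq, hval] at h
  exact h

private lemma exists_digits (n : ℕ) (hn : 2 ≤ n) (y : ℝ) (hy0 : 0 ≤ y) (hy1 : y < 1) :
    ∃ d : ℕ → ℕ, (∀ i, d i ≤ n - 1) ∧
      Filter.Tendsto (fun m => ∑ i ∈ Finset.range m, (d i : ℝ) / n ^ (i+1))
        Filter.atTop (nhds y) := by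
  have hn1 : (1:ℝ) < n := nlt' n hn
  have hn0 : (0:ℝ) < n := by linarith
  set r : ℕ → ℝ := fun m => Nat.rec y (fun _ x => Int.fract ((n:ℝ) * x)) m with hr
  have hr0 : r 0 = y := rfl
  have hrs : ∀ m, r (m+1) = Int.fract ((n:ℝ) * r m) := fun m => rfl
  have hrb : ∀ m, 0 ≤ r m ∧ r m < 1 := by
    intro m
    induction m with
    | zero => exact ⟨hy0, hy1⟩
    | succ m ih => exact ⟨Int.fract_nonneg _, Int.fract_lt_one _⟩
  set d : ℕ → ℕ := fun m => (⌊(n : ℝ) * r m⌋).toNat with hd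
  have hflnn : ∀ m, (0:ℤ) ≤ ⌊(n : ℝ) * r m⌋ :=
    fun m => Int.floor_nonneg.2 (mul_nonneg hn0.le (hrb m).1)
  have hfl : ∀ m, ((d m : ℝ)) = (⌊(n : ℝ) * r m⌋ : ℤ) := by
    intro m
    have h := Int.toNat_of_nonneg (hflnn m)
    rw [hd]
    exact_mod_cast congrArg (fun z : ℤ => (z:ℝ)) h
  have hdlt : ∀ m, d m ≤ n - 1 := by
    intro m
    have hlt : ⌊(n : ℝ) * r m⌋ < (n:ℤ) := by
      apply Int.floor_lt.2
      push_cast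
      nlinarith [(hrb m).2, (hrb m).1]
    have h0 := hflnn m
    simp only [hd]
    omega
  have hrec : ∀ m, (d m : ℝ) = n * r m - r (m+1) := by
    intro m
    rw [hfl m, hrs m, Int.self_sub_fract]
  have hpart : ∀ m, ∑ i ∈ Finset.range m, (d i : ℝ) / n ^ (i+1) = y - r m / n ^ m := by
    intro m
    induction m with
    | zero => simp [hr0]
    | succ m ih =>
      rw [Finset.sum_range_succ, ih, hrec m]
      have hne : (n:ℝ) ^ m ≠ 0 := by positivity
      have hne1 : (n:ℝ) ^ (m+1) ≠ 0 := by positivity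
      field_simp
      ring
  have htend : Filter.Tendsto (fun m => r m / n ^ m) Filter.atTop (nhds 0) := by
    have hlim : Filter.Tendsto (fun m : ℕ => (1/(n:ℝ))^m) Filter.atTop (nhds 0) :=
      tendsto_pow_atTop_nhds_zero_of_lt_one (by positivity)
        (by rw [div_lt_one hn0]; exact hn1)
    refine squeeze_zero (fun m => div_nonneg (hrb m).1 (by positivity)) (fun m => ?_) hlim
    rw [div_pow, one_pow]
    exact div_le_div_of_nonneg_right (hrb m).2.le (by positivity)
  refine ⟨d, hdlt, ?_⟩
  have h2 := (tendsto_const_nhds (x := y) (f := Filter.atTop (α := ℕ))).sub htend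
  rw [sub_zero] at h2
  exact h2.congr (fun m => (hpart m).symm)

/-- Every `x ∈ [0,2]` has a representation with digits at most `2(n-1)`. -/
private lemma exists_rep (n : ℕ) (hn : 2 ≤ n) (x : ℝ) (hx : x ∈ Set.Icc (0:ℝ) 2) :
    ∃ b : ℕ → ℕ, (∀ i, b i ≤ 2 * (n - 1)) ∧
      HasSum (fun i => (b i : ℝ) / n ^ (i + 1)) x := by
  obtain ⟨hx0, hx2⟩ := hx
  rcases eq_or_lt_of_le hx2 with h2 | h2
  · refine ⟨fun _ => 2 * (n - 1), fun _ => le_refl _, ?_⟩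
    have h := (hasSum_top n hn).mul_left 2
    rw [mul_one] at h
    have heq : (fun i : ℕ => ((2*(n-1) : ℕ) : ℝ) / n ^ (i+1))
        = fun i : ℕ => 2 * (((n:ℝ)-1)/n^(i+1)) := by
      funext i
      push_cast [Nat.cast_sub (by omega : 1 ≤ n)]
      ring
    rw [h2, heq]
    exact h
  · have hy0 : 0 ≤ x/2 := by linarith
    have hy1 : x/2 < 1 := by linarith
    obtain ⟨d, hdle, htend⟩ := exists_digits n hn (x/2) hy0 hy1
    have hsum : Summable (fun i => (d i : ℝ)/n^(i+1)) := summable_digits n hn d (n-1) hdle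
    have hhs : HasSum (fun i => (d i:ℝ)/n^(i+1)) (x/2) :=
      hsum.hasSum_iff_tendsto_nat.mpr htend
    refine ⟨fun i => 2 * d i, fun i => by show 2 * d i ≤ 2 * (n-1); have := hdle i; omega, ?_⟩
    have h := hhs.mul_left 2
    have hx' : 2 * (x/2) = x := by ring
    rw [hx'] at h
    have heq : (fun i : ℕ => ((2 * d i : ℕ) : ℝ) / n ^ (i+1))
        = fun i : ℕ => 2 * ((d i : ℝ)/n^(i+1)) := by
      funext i
      push_cast
      ring
    rw [heq]
    exact h

private def goodElt (n k x : ℕ) : Prop := x < n ∧ (x ≤ k ∨ n - 1 - k ≤ x ∨ k ∣ x)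

private lemma cover (n k m : ℕ) (hn : 1 ≤ n) (hk : 1 ≤ k) (hm : m ≤ 2 * (n-1)) :
    ∃ a b : ℕ, a + b = m ∧ goodElt n k a ∧ goodElt n k b := by
  rcases le_or_gt m (n-1) with h | h
  · refine ⟨m % k, k * (m / k), by rw [Nat.mod_add_div],
      ⟨?_, Or.inl ?_⟩, ⟨?_, Or.inr (Or.inr ⟨_, rfl⟩)⟩⟩
    · have := Nat.mod_le m k; omega
    · exact (Nat.mod_lt m hk).le
    · have := Nat.mod_add_div m k; have := Nat.mod_le m k; omega
  · set s := m - (n-1) with hs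
    have hs1 : 1 ≤ s := by omega
    have hsn : s ≤ n - 1 := by omega
    rcases le_or_gt (n - 1 - s) (2*k) with h2 | h2
    · set i := min k (n - 1 - s) with hi
      set j := n - 1 - s - i with hj
      refine ⟨n - 1 - i, n - 1 - j, by omega, ⟨by omega, Or.inr (Or.inl (by omega))⟩,
        ⟨by omega, Or.inr (Or.inl (by omega))⟩⟩
    · obtain ⟨q, r, hrk, hqr⟩ : ∃ q r, r < k ∧ s = k * q + r :=
        ⟨s / k, s % k, Nat.mod_lt s hk, (Nat.div_add_mod s k).symm⟩
      refine ⟨n - 1 - (k - r), k * q + k, by omega,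
        ⟨by omega, Or.inr (Or.inl (by omega))⟩,
        ⟨by omega, Or.inr (Or.inr ⟨q + 1, (Nat.mul_succ k q).symm⟩)⟩⟩

/-- For every `n ≥ 2` there is an `n`-good set `A` of size `O(√n)`. -/
theorem exists_good_small (n : ℕ) (hn : 2 ≤ n) :
    ∃ A : Finset ℕ, 0 ∈ A ∧ n - 1 ∈ A ∧ (∀ a ∈ A, a < n) ∧
      A.card ≤ 3 * (⌈Real.sqrt n⌉₊ + 1) ∧
      linCantor n ↑A + linCantor n ↑A = Set.Icc (0 : ℝ) 2 := by
  set k := ⌈Real.sqrt n⌉₊ with hkdef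
  have hk1 : 1 ≤ k := by
    rw [hkdef]
    have : (0:ℝ) < Real.sqrt n := Real.sqrt_pos.2 (by positivity)
    exact Nat.one_le_iff_ne_zero.2 (by
      intro h
      rw [Nat.ceil_eq_zero] at h
      linarith)
  have hkk : n ≤ k * k := by
    have h1 : Real.sqrt n ≤ (k:ℝ) := Nat.le_ceil _
    have h2 : (n:ℝ) ≤ (k:ℝ) * (k:ℝ) := by
      nlinarith [Real.sq_sqrt (by positivity : (0:ℝ) ≤ (n:ℝ)), Real.sqrt_nonneg (n:ℝ)]
    exact_mod_cast h2
  set A : Finset ℕ := Finset.range (min (k+1) n) ∪ Finset.Icc (n-1-k) (n-1) ∪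
    (Finset.range n).filter (fun x => k ∣ x) with hA
  have hmem : ∀ x, goodElt n k x → x ∈ A := by
    intro x ⟨hxn, hx⟩
    rw [hA]
    simp only [Finset.mem_union, Finset.mem_range, Finset.mem_Icc, Finset.mem_filter]
    rcases hx with h | h | h
    · exact Or.inl (Or.inl (by omega))
    · exact Or.inl (Or.inr ⟨h, by omega⟩)
    · exact Or.inr ⟨hxn, h⟩
  have hlt : ∀ a ∈ A, a < n := by
    intro a ha
    rw [hA] at ha
    simp only [Finset.mem_union, Finset.mem_range, Finset.mem_Icc, Finset.mem_filter] at ha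
    rcases ha with (h | h) | h
    · omega
    · omega
    · exact h.1
  refine ⟨A, hmem 0 ⟨by omega, Or.inl (Nat.zero_le _)⟩,
    hmem (n-1) ⟨by omega, Or.inr (Or.inl (by omega))⟩, hlt, ?_, ?_⟩
  · -- cardinality
    have hc1 : (Finset.range (min (k+1) n)).card ≤ k + 1 := by
      rw [Finset.card_range]; omega
    have hc2 : (Finset.Icc (n-1-k) (n-1)).card ≤ k + 1 := by
      rw [Nat.card_Icc]; omega
    have hc3 : ((Finset.range n).filter (fun x => k ∣ x)).card ≤ k + 1 := by
      have hsub : (Finset.range n).filter (fun x => k ∣ x) ⊆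
          (Finset.range (k+1)).image (fun c => k * c) := by
        intro x hx
        simp only [Finset.mem_filter, Finset.mem_range] at hx
        obtain ⟨hxn, c, rfl⟩ := hx
        simp only [Finset.mem_image, Finset.mem_range]
        refine ⟨c, ?_, rfl⟩
        by_contra hc
        push_neg at hc
        have : k * (k+1) ≤ k * c := Nat.mul_le_mul_left k hc
        nlinarith
      calc ((Finset.range n).filter (fun x => k ∣ x)).card
          ≤ ((Finset.range (k+1)).image (fun c => k * c)).card := Finset.card_le_card hsub
        _ ≤ (Finset.range (k+1)).card := Finset.card_image_le
        _ = k + 1 := Finset.card_range _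
    calc A.card ≤ (Finset.range (min (k+1) n) ∪ Finset.Icc (n-1-k) (n-1)).card +
          ((Finset.range n).filter (fun x => k ∣ x)).card := Finset.card_union_le _ _
      _ ≤ (Finset.range (min (k+1) n)).card + (Finset.Icc (n-1-k) (n-1)).card +
          ((Finset.range n).filter (fun x => k ∣ x)).card := by
            have := Finset.card_union_le (Finset.range (min (k+1) n)) (Finset.Icc (n-1-k) (n-1))
            omega
      _ ≤ 3 * (k + 1) := by omega
  · -- set equality
    apply Set.Subset.antisymm
    · rintro x ⟨u, hu, v, hv, rfl⟩
      have key : ∀ w ∈ linCantor n (↑A : Set ℕ), w ∈ Set.Icc (0:ℝ) 1 := by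
        rintro w ⟨a, haA, rfl⟩
        have hale : ∀ i, a i ≤ n - 1 := fun i => by
          have := hlt (a i) (haA i); omega
        have hsum : Summable (fun i => (a i : ℝ)/n^(i+1)) :=
          summable_digits n hn a (n-1) hale
        constructor
        · exact tsum_nonneg (fun i => by positivity)
        · have hle : ∀ i, (a i : ℝ)/n^(i+1) ≤ ((n:ℝ)-1)/n^(i+1) := by
            intro i
            apply div_le_div_of_nonneg_right _ (by positivity : (0:ℝ) ≤ (n:ℝ)^(i+1))
            have h1 : (a i : ℝ) ≤ ((n - 1 : ℕ) : ℝ) := by exact_mod_cast hale i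
            have h2 : ((n - 1 : ℕ) : ℝ) = (n:ℝ) - 1 := by
              push_cast [Nat.cast_sub (by omega : 1 ≤ n)]; ring
            linarith
          calc (∑' i, (a i : ℝ)/n^(i+1)) ≤ ∑' i, ((n:ℝ)-1)/n^(i+1) :=
                Summable.tsum_le_tsum hle hsum (hasSum_top n hn).summable
            _ = 1 := (hasSum_top n hn).tsum_eq
      obtain ⟨hu0, hu1⟩ := key u hu
      obtain ⟨hv0, hv1⟩ := key v hv
      show u + v ∈ Set.Icc (0:ℝ) 2
      exact ⟨by linarith, by linarith⟩
    · intro x hx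
      obtain ⟨b, hble, hbsum⟩ := exists_rep n hn x hx
      have hch : ∀ i, ∃ a c : ℕ, a + c = b i ∧ goodElt n k a ∧ goodElt n k c :=
        fun i => cover n k (b i) (by omega) hk1 (hble i)
      choose f g hfg hf hg using hch
      have hfs : Summable (fun i => (f i : ℝ)/n^(i+1)) :=
        summable_digits n hn f n (fun i => (hf i).1.le)
      have hgs : Summable (fun i => (g i : ℝ)/n^(i+1)) :=
        summable_digits n hn g n (fun i => (hg i).1.le)
      have hadd : HasSum (fun i => (b i : ℝ)/n^(i+1))
          ((∑' i, (f i : ℝ)/n^(i+1)) + ∑' i, (g i : ℝ)/n^(i+1)) := by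
        have h := hfs.hasSum.add hgs.hasSum
        have heq : (fun i => (f i:ℝ)/n^(i+1) + (g i:ℝ)/n^(i+1))
            = fun i => (b i : ℝ)/n^(i+1) := by
          funext i
          rw [← add_div]
          norm_cast
          rw [hfg i]
        rw [heq] at h
        exact h
      have hx' : x = (∑' i, (f i : ℝ)/n^(i+1)) + ∑' i, (g i : ℝ)/n^(i+1) :=
        hbsum.unique hadd
      rw [hx']
      exact Set.add_mem_add ⟨f, fun i => hmem _ (hf i), rfl⟩ ⟨g, fun i => hmem _ (hg i), rfl⟩
end
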